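/- Let H ∈ (1/2, 1) and set α_H = H(2H−1). Then for all integers i, j ≥ 1 with i ≠ j, one has ∫₀^1 ∫₀^1 α_H |u + i − v − j|^{2H−2} du dv ≤ (1/2) max(i, j)^{2H−1}. -/

import Mathlib

open MeasureTheory Set Real

lemma auxA (r : ℝ) (hr : -1 < r) (a : ℝ) :
    ∫ v in Set.Ioo (0:ℝ) 1, (a + v) ^ r = ((a+1)^(r+1) - a^(r+1))/(r+1) := by
  rw [← integral_Ioc_eq_integral_Ioo, ← intervalIntegral.integral_of_le zero_le_one,
    intervalIntegral.integral_comp_add_left (fun x => x ^ r) a,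
    integral_rpow (Or.inl hr)]
  norm_num

lemma auxB (r : ℝ) (hr : -1 < r) (b : ℝ) :
    ∫ v in Set.Ioo (0:ℝ) 1, (b - v) ^ r = (b^(r+1) - (b-1)^(r+1))/(r+1) := by
  rw [← integral_Ioc_eq_integral_Ioo, ← intervalIntegral.integral_of_le zero_le_one,
    intervalIntegral.integral_comp_sub_left (fun x => x ^ r) b,
    integral_rpow (Or.inl hr)]
  norm_num

lemma key1 (H : ℝ) (h1 : 1/2 < H) (h2 : H < 1) : (2:ℝ)^(2*H) - 2 ≤ 2^(2*H-1) := by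
  have h3 : (2:ℝ)^(2*H-1) ≤ 2^(1:ℝ) :=
    Real.rpow_le_rpow_of_exponent_le one_le_two (by linarith)
  have h4 : (2:ℝ)^(2*H) = 2^(2*H-1) * 2 := by
    have h5 : (2:ℝ)^(2*H-1+1) = 2^(2*H-1) * 2 := by
      rw [Real.rpow_add_one two_ne_zero]
    rw [show 2*H-1+1 = 2*H by ring] at h5
    exact h5
  rw [Real.rpow_one] at h3
  linarith

lemma key2 (H : ℝ) (h1 : 1/2 < H) (h2 : H < 1) : H * (2*H-1) ≤ (1/2) * 3^(2*H-1) := by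
  have hx0 : 0 < 2*H-1 := by linarith
  have hx1 : 2*H-1 < 1 := by linarith
  have hlog : 1 ≤ Real.log 3 := by
    rw [Real.le_log_iff_exp_le (by norm_num)]
    exact (lt_trans Real.exp_one_lt_d9 (by norm_num)).le
  have h3 : (3:ℝ)^(2*H-1) = Real.exp (Real.log 3 * (2*H-1)) := by
    rw [Real.rpow_def_of_pos (by norm_num)]
  have h4 : Real.log 3 * (2*H-1) + 1 ≤ Real.exp (Real.log 3 * (2*H-1)) :=
    Real.add_one_le_exp _
  rw [h3]
  nlinarith

lemma hcontp (p : ℝ) (hp : 0 ≤ p) : Continuous fun x : ℝ => x ^ p :=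
  continuous_iff_continuousAt.mpr fun x => Real.continuousAt_rpow_const x p (Or.inr hp)

/-- exact value in the adjacent case, orientation `i = j+1` -/
lemma iterA (H : ℝ) (h1 : 1/2 < H) (h2 : H < 1) :
    (∫ u in Set.Ioo (0:ℝ) 1, ∫ v in Set.Ioo (0:ℝ) 1,
        H * (2*H - 1) * |1 + u - v| ^ (2*H - 2))
      = (1/2) * (2 ^ (2*H) - 2) := by
  have hr : -1 < 2*H - 2 := by linarith
  have hp : (0:ℝ) < 2*H - 1 := by linarith
  have hne : 2*H - 1 ≠ 0 := ne_of_gt hp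
  have h2H : (2*H) ≠ 0 := by positivity
  have hinner : ∀ u ∈ Set.Ioo (0:ℝ) 1,
      (∫ v in Set.Ioo (0:ℝ) 1, H * (2*H - 1) * |1 + u - v| ^ (2*H - 2))
        = H * ((1+u)^(2*H-1) - u^(2*H-1)) := by
    intro u hu
    have h1' : Set.EqOn (fun v => H * (2*H - 1) * |1 + u - v| ^ (2*H - 2))
        (fun v => H * (2*H - 1) * (1 + u - v) ^ (2*H - 2)) (Set.Ioo 0 1) := by
      intro v hv
      simp only
      rw [abs_of_pos (by nlinarith [hu.1, hv.2] : (0:ℝ) < 1 + u - v)]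
    rw [setIntegral_congr_fun measurableSet_Ioo h1', MeasureTheory.integral_const_mul,
      auxB (2*H-2) hr (1+u), show 2*H-2+1 = 2*H-1 by ring, show 1+u-1 = u by ring]
    rw [mul_assoc, mul_div_assoc', mul_div_cancel_left₀ _ (ne_of_gt hp)]
  rw [setIntegral_congr_fun measurableSet_Ioo hinner]
  have hcont := hcontp (2*H-1) hp.le
  have hi1 : IntegrableOn (fun u : ℝ => (1+u)^(2*H-1)) (Set.Ioo 0 1) volume :=
    ((hcont.comp (continuous_const.add continuous_id)).integrableOn_Icc (a := 0) (b := 1)).mono_set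
      Set.Ioo_subset_Icc_self
  have hi2 : IntegrableOn (fun u : ℝ => u^(2*H-1)) (Set.Ioo 0 1) volume :=
    (hcont.integrableOn_Icc (a := 0) (b := 1)).mono_set Set.Ioo_subset_Icc_self
  rw [MeasureTheory.integral_const_mul, MeasureTheory.integral_sub hi1 hi2]
  have e1 : ∫ u in Set.Ioo (0:ℝ) 1, (1+u)^(2*H-1) = (2^(2*H) - 1)/(2*H) := by
    have := auxA (2*H-1) (by linarith) 1
    rw [show 2*H-1+1 = 2*H by ring] at this
    norm_num at this ⊢
    rw [this]
  have e2 : ∫ u in Set.Ioo (0:ℝ) 1, u^(2*H-1) = 1/(2*H) := by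
    have := auxA (2*H-1) (by linarith) 0
    simp only [zero_add] at this
    rw [show 2*H-1+1 = 2*H by ring, Real.zero_rpow h2H, Real.one_rpow] at this
    rw [this]
    norm_num
  rw [e1, e2]
  field_simp
  ring

/-- exact value in the adjacent case, orientation `j = i+1` -/
lemma iterB (H : ℝ) (h1 : 1/2 < H) (h2 : H < 1) :
    (∫ u in Set.Ioo (0:ℝ) 1, ∫ v in Set.Ioo (0:ℝ) 1,
        H * (2*H - 1) * |(1 - u) + v| ^ (2*H - 2))
      = (1/2) * (2 ^ (2*H) - 2) := by
  have hr : -1 < 2*H - 2 := by linarith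
  have hp : (0:ℝ) < 2*H - 1 := by linarith
  have h2H : (2*H) ≠ 0 := by positivity
  have hinner : ∀ u ∈ Set.Ioo (0:ℝ) 1,
      (∫ v in Set.Ioo (0:ℝ) 1, H * (2*H - 1) * |(1 - u) + v| ^ (2*H - 2))
        = H * ((2-u)^(2*H-1) - (1-u)^(2*H-1)) := by
    intro u hu
    have h1' : Set.EqOn (fun v => H * (2*H - 1) * |(1 - u) + v| ^ (2*H - 2))
        (fun v => H * (2*H - 1) * ((1 - u) + v) ^ (2*H - 2)) (Set.Ioo 0 1) := by
      intro v hv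
      simp only
      rw [abs_of_pos (by nlinarith [hu.2, hv.1] : (0:ℝ) < (1 - u) + v)]
    rw [setIntegral_congr_fun measurableSet_Ioo h1', MeasureTheory.integral_const_mul,
      auxA (2*H-2) hr (1-u), show 2*H-2+1 = 2*H-1 by ring, show 1-u+1 = 2-u by ring]
    rw [mul_assoc, mul_div_assoc', mul_div_cancel_left₀ _ (ne_of_gt hp)]
  rw [setIntegral_congr_fun measurableSet_Ioo hinner]
  have hcont := hcontp (2*H-1) hp.le
  have hi1 : IntegrableOn (fun u : ℝ => (2-u)^(2*H-1)) (Set.Ioo 0 1) volume :=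
    ((hcont.comp (continuous_const.sub continuous_id)).integrableOn_Icc (a := 0) (b := 1)).mono_set
      Set.Ioo_subset_Icc_self
  have hi2 : IntegrableOn (fun u : ℝ => (1-u)^(2*H-1)) (Set.Ioo 0 1) volume :=
    ((hcont.comp (continuous_const.sub continuous_id)).integrableOn_Icc (a := 0) (b := 1)).mono_set
      Set.Ioo_subset_Icc_self
  rw [MeasureTheory.integral_const_mul, MeasureTheory.integral_sub hi1 hi2]
  have e1 : ∫ u in Set.Ioo (0:ℝ) 1, (2-u)^(2*H-1) = (2^(2*H) - 1)/(2*H) := by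
    have := auxB (2*H-1) (by linarith) 2
    rw [show 2*H-1+1 = 2*H by ring] at this
    norm_num at this ⊢
    rw [this]
  have e2 : ∫ u in Set.Ioo (0:ℝ) 1, (1-u)^(2*H-1) = 1/(2*H) := by
    have := auxB (2*H-1) (by linarith) 1
    rw [show 2*H-1+1 = 2*H by ring, show (1:ℝ)-1 = 0 by ring, Real.zero_rpow h2H,
      Real.one_rpow] at this
    rw [this]
    norm_num
  rw [e1, e2]
  field_simp
  ring

/-- bound in the far case `|i - j| ≥ 2` -/
lemma bound_far (H : ℝ) (h1 : 1/2 < H) (h2 : H < 1) (i j : ℕ)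
    (hfar : 2 ≤ |(i:ℝ) - (j:ℝ)|) :
    (∫ u in Set.Ioo (0:ℝ) 1, ∫ v in Set.Ioo (0:ℝ) 1,
        H * (2*H - 1) * |u + (i : ℝ) - v - (j : ℝ)| ^ (2*H - 2))
      ≤ H * (2*H - 1) := by
  have hα : (0:ℝ) ≤ H * (2*H-1) := by nlinarith
  have hone : ∀ u ∈ Set.Ioo (0:ℝ) 1, ∀ v ∈ Set.Ioo (0:ℝ) 1,
      (1:ℝ) ≤ |u + (i:ℝ) - v - (j:ℝ)| := by
    intro u hu v hv
    rcases le_abs.mp hfar with h | h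
    · exact le_abs.mpr (Or.inl (by linarith [hu.1, hv.2]))
    · exact le_abs.mpr (Or.inr (by linarith [hu.2, hv.1]))
  have hIoo : (volume (Set.Ioo (0:ℝ) 1)).toReal = 1 := by simp
  have hbound : ∀ u ∈ Set.Ioo (0:ℝ) 1,
      ‖∫ v in Set.Ioo (0:ℝ) 1, H * (2*H - 1) * |u + (i:ℝ) - v - (j:ℝ)| ^ (2*H - 2)‖
        ≤ H * (2*H-1) := by
    intro u hu
    have := norm_setIntegral_le_of_norm_le_const
      (f := fun v => H * (2*H - 1) * |u + (i:ℝ) - v - (j:ℝ)| ^ (2*H - 2))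
      (μ := volume) (C := H * (2*H-1)) (s := Set.Ioo (0:ℝ) 1)
      (by rw [Real.volume_Ioo]; exact ENNReal.ofReal_lt_top) ?_
    · rwa [measureReal_def, hIoo, mul_one] at this
    · intro v hv
      rw [Real.norm_eq_abs, abs_of_nonneg (by positivity)]
      have hle : |u + (i:ℝ) - v - (j:ℝ)| ^ (2*H-2) ≤ 1 :=
        Real.rpow_le_one_of_one_le_of_nonpos (hone u hu v hv) (by linarith)
      calc H * (2*H - 1) * |u + (i:ℝ) - v - (j:ℝ)| ^ (2*H - 2)
          ≤ H * (2*H-1) * 1 := mul_le_mul_of_nonneg_left hle hα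
        _ = H * (2*H-1) := mul_one _
  calc (∫ u in Set.Ioo (0:ℝ) 1, ∫ v in Set.Ioo (0:ℝ) 1,
        H * (2*H - 1) * |u + (i : ℝ) - v - (j : ℝ)| ^ (2*H - 2))
      ≤ ‖∫ u in Set.Ioo (0:ℝ) 1, ∫ v in Set.Ioo (0:ℝ) 1,
        H * (2*H - 1) * |u + (i : ℝ) - v - (j : ℝ)| ^ (2*H - 2)‖ := le_abs_self _
    _ ≤ H * (2*H-1) * (volume (Set.Ioo (0:ℝ) 1)).toReal :=
        norm_setIntegral_le_of_norm_le_const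
          (by rw [Real.volume_Ioo]; exact ENNReal.ofReal_lt_top) hbound
    _ = H * (2*H-1) := by rw [hIoo, mul_one]

/-- For `H ∈ (1/2, 1)`, `α_H = H(2H-1)` and integers `i ≠ j` with
`i, j ≥ 1`, `∫₀^1 ∫₀^1 α_H |u + i - v - j|^{2H-2} du dv ≤ (1/2) max(i,j)^{2H-1}`. -/
theorem stmt_9 (H : ℝ) (hH : H ∈ Set.Ioo (1/2 : ℝ) 1)
    (i j : ℕ) (hi : 1 ≤ i) (hj : 1 ≤ j) (hij : i ≠ j) :
    (∫ u in Set.Ioo (0:ℝ) 1, ∫ v in Set.Ioo (0:ℝ) 1,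
        H * (2*H - 1) * |u + (i : ℝ) - v - (j : ℝ)| ^ (2*H - 2))
      ≤ (1/2) * (max (i : ℝ) (j : ℝ)) ^ (2*H - 1) := by
  obtain ⟨h1, h2⟩ := hH
  have hp : (0:ℝ) < 2*H - 1 := by linarith
  rcases lt_or_gt_of_ne hij with hlt | hlt
  · -- i < j, max = j
    have hmax : max (i:ℝ) (j:ℝ) = (j:ℝ) := max_eq_right (by exact_mod_cast hlt.le)
    rcases eq_or_lt_of_le (Nat.succ_le_of_lt hlt) with hadj | hfar2
    · -- j = i + 1
      have hj' : (j:ℝ) = (i:ℝ) + 1 := by exact_mod_cast hadj.symm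
      have hrw : ∀ u v : ℝ, u + (i:ℝ) - v - ((i:ℝ)+1) = -((1 - u) + v) := by
        intro u v; ring
      rw [hmax, hj']
      simp only [hrw, abs_neg]
      rw [iterB H h1 h2]
      have hj2 : (2:ℝ) ≤ (i:ℝ) + 1 := by
        have : (1:ℕ) ≤ i := hi
        exact_mod_cast Nat.succ_le_succ this
      have := key1 H h1 h2
      have hmono : (2:ℝ)^(2*H-1) ≤ ((i:ℝ)+1)^(2*H-1) :=
        Real.rpow_le_rpow (by norm_num) hj2 hp.le
      nlinarith
    · -- i + 2 ≤ j
      have hfar : 2 ≤ |(i:ℝ) - (j:ℝ)| := by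
        rw [abs_sub_comm]
        have : ((i:ℝ)) + 2 ≤ (j:ℝ) := by exact_mod_cast hfar2
        rw [abs_of_nonneg (by linarith)]
        linarith
      have hM3 : (3:ℝ) ≤ max (i:ℝ) (j:ℝ) := by
        rw [hmax]
        have : (1:ℝ) ≤ (i:ℝ) := by exact_mod_cast hi
        have : ((i:ℝ)) + 2 ≤ (j:ℝ) := by exact_mod_cast hfar2
        linarith
      calc _ ≤ H * (2*H-1) := bound_far H h1 h2 i j hfar
        _ ≤ (1/2) * 3^(2*H-1) := key2 H h1 h2
        _ ≤ (1/2) * (max (i:ℝ) (j:ℝ))^(2*H-1) := by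
            have := Real.rpow_le_rpow (by norm_num : (0:ℝ) ≤ 3) hM3 hp.le
            linarith
  · -- j < i, max = i
    have hmax : max (i:ℝ) (j:ℝ) = (i:ℝ) := max_eq_left (by exact_mod_cast hlt.le)
    rcases eq_or_lt_of_le (Nat.succ_le_of_lt hlt) with hadj | hfar2
    · -- i = j + 1
      have hi' : (i:ℝ) = (j:ℝ) + 1 := by exact_mod_cast hadj.symm
      have hrw : ∀ u v : ℝ, u + ((j:ℝ)+1) - v - (j:ℝ) = 1 + u - v := by
        intro u v; ring
      rw [hmax, hi']
      simp only [hrw]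
      rw [iterA H h1 h2]
      have hj2 : (2:ℝ) ≤ (j:ℝ) + 1 := by
        have : (1:ℕ) ≤ j := hj
        exact_mod_cast Nat.succ_le_succ this
      have := key1 H h1 h2
      have hmono : (2:ℝ)^(2*H-1) ≤ ((j:ℝ)+1)^(2*H-1) :=
        Real.rpow_le_rpow (by norm_num) hj2 hp.le
      nlinarith
    · -- j + 2 ≤ i
      have hfar : 2 ≤ |(i:ℝ) - (j:ℝ)| := by
        have : ((j:ℝ)) + 2 ≤ (i:ℝ) := by exact_mod_cast hfar2
        rw [abs_of_nonneg (by linarith)]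
        linarith
      have hM3 : (3:ℝ) ≤ max (i:ℝ) (j:ℝ) := by
        rw [hmax]
        have : (1:ℝ) ≤ (j:ℝ) := by exact_mod_cast hj
        have : ((j:ℝ)) + 2 ≤ (i:ℝ) := by exact_mod_cast hfar2
        linarith
      calc _ ≤ H * (2*H-1) := bound_far H h1 h2 i j hfar
        _ ≤ (1/2) * 3^(2*H-1) := key2 H h1 h2
        _ ≤ (1/2) * (max (i:ℝ) (j:ℝ))^(2*H-1) := by
            have := Real.rpow_le_rpow (by norm_num : (0:ℝ) ≤ 3) hM3 hp.le
            linarith
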